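/- Let L be a closed subspace of E = ℓ²(X) and X₀ ⊆ X finite. If L ∩ E_{X₀'} = {0} and L^⊥ ∩ E_{X₀} = {0} for disjoint finite X₀, X₀', then for any partition X₀ = X₁ ⊔ X₂, the subspace L ∩ E_{X∖X₁} satisfies (L ∩ E_{X∖X₁}) ∩ E_{X₀'} = {0} and (L ∩ E_{X∖X₁})^⊥ ∩ E_{X₂} = {0}, where the orthogonal complement is taken inside E_{X∖X₁}. -/

import Mathlib

set_option linter.unusedSectionVars false
set_option linter.unusedVariables false
set_option maxHeartbeats 1000000
set_option synthInstance.maxHeartbeats 400000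


noncomputable section

variable {X : Type*} [DecidableEq X]

/-- The canonical basis vector `e_x` of `ℓ²(X)`. -/
def basisVec (x : X) : lp (fun _ : X => ℂ) 2 := lp.single 2 x 1

/-- `E_A`: the closed linear span of the basis vectors indexed by `A`. -/
def spanE (A : Set X) : Submodule ℂ (lp (fun _ : X => ℂ) 2) :=
  (Submodule.span ℂ (basisVec '' A)).topologicalClosure

/-- The `(X₀,X₀')`-reduction `L_{X₀,X₀'} = (L + E_{X₀'}) ∩ E_{X∖(X₀⊔X₀')}` of `L`. -/
def reduction (L : Submodule ℂ (lp (fun _ : X => ℂ) 2)) (X₀ X₀' : Set X) :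
    Submodule ℂ (lp (fun _ : X => ℂ) 2) :=
  (L ⊔ spanE X₀') ⊓ spanE (X₀ ∪ X₀')ᶜ

local notation "H" => lp (fun _ : X => ℂ) 2

open scoped ComplexConjugate

lemma basisVec_apply (x y : X) : (basisVec x : ∀ _ : X, ℂ) y = if y = x then 1 else 0 := by
  rw [basisVec, lp.single_apply, Pi.single_apply]

def coordZero (A : Set X) : Submodule ℂ H where
  carrier := {v : H | ∀ x ∉ A, v x = 0}
  add_mem' := fun {f g} hf hg x hx => by
    simp only [lp.coeFn_add, Pi.add_apply, hf x hx, hg x hx, add_zero]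
  zero_mem' := fun x _ => by simp [lp.coeFn_zero]
  smul_mem' := fun c f hf x hx => by
    simp only [lp.coeFn_smul, Pi.smul_apply, hf x hx, smul_zero]

lemma continuous_eval (x : X) : Continuous fun v : H => v x := by
  have : LipschitzWith 1 fun v : H => v x := by
    refine LipschitzWith.of_dist_le_mul fun f g => ?_
    rw [dist_eq_norm, dist_eq_norm, NNReal.coe_one, one_mul]
    have := lp.norm_apply_le_norm (p := 2) (by norm_num) (f - g) x
    simpa [lp.coeFn_sub] using this
  exact this.continuous

lemma isClosed_coordZero (A : Set X) : IsClosed ((coordZero A : Set H)) := by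
  have : (coordZero A : Set H) = ⋂ x ∈ Aᶜ, {v : H | v x = 0} := by
    ext v
    simp only [Set.mem_iInter, Set.mem_setOf_eq, Set.mem_compl_iff]
    rfl
  rw [this]
  exact isClosed_biInter fun x _ => isClosed_eq (continuous_eval x) continuous_const

lemma mem_spanE {A : Set X} {v : H} : v ∈ spanE A ↔ ∀ x ∉ A, v x = 0 := by
  constructor
  · intro h
    have hle : spanE A ≤ coordZero A := by
      apply Submodule.topologicalClosure_minimal
      · rw [Submodule.span_le]
        rintro _ ⟨x, hx, rfl⟩ y hy
        have hne : y ≠ x := fun h' => hy (h' ▸ hx)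
        simp [basisVec_apply, hne]
      · exact isClosed_coordZero A
    exact hle h
  · intro hv
    have hsum : HasSum (fun x => lp.single 2 x (v x)) v :=
      lp.hasSum_single ENNReal.ofNat_ne_top v
    have hmem : ∀ s : Finset X,
        ∑ x ∈ s, lp.single 2 x (v x) ∈ Submodule.span ℂ (basisVec '' A) := by
      intro s
      refine Submodule.sum_mem _ fun x _ => ?_
      by_cases hx : x ∈ A
      · have h1 : lp.single 2 x (v x) = v x • basisVec x := by
          rw [basisVec, ← lp.single_smul]
          norm_num
        rw [h1]
        exact Submodule.smul_mem _ _ (Submodule.subset_span ⟨x, hx, rfl⟩)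
      · rw [hv x hx]
        have h0 : lp.single 2 x (0:ℂ) = (0 : H) := by
          apply lp.ext; funext y
          rw [lp.single_apply, lp.coeFn_zero, Pi.single_apply]
          split_ifs with h
          · subst h; rfl
          · rfl
        rw [h0]
        exact Submodule.zero_mem _
    have : v ∈ closure (Submodule.span ℂ (basisVec '' A) : Set H) :=
      mem_closure_of_tendsto hsum (Filter.Eventually.of_forall hmem)
    exact this

lemma inner_eq_sum_of_support (t : Finset X) (f g : H) (hf : ∀ x ∉ t, f x = 0) :
    (inner ℂ f g : ℂ) = ∑ x ∈ t, conj (f x) * g x := by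
  rw [lp.inner_eq_tsum, tsum_eq_sum (s := t) (fun x hx => by rw [hf x hx]; exact inner_zero_left _)]
  refine Finset.sum_congr rfl fun x _ => ?_
  rw [RCLike.inner_apply, mul_comm]

lemma spanE_mono {A B : Set X} (h : A ⊆ B) : spanE A ≤ spanE B :=
  Submodule.topologicalClosure_mono (Submodule.span_mono (Set.image_mono h))

lemma basisVec_mem_spanE {A : Set X} {x : X} (hx : x ∈ A) : basisVec x ∈ spanE A :=
  (Submodule.span ℂ (basisVec '' A)).le_topologicalClosure (Submodule.subset_span ⟨x, hx, rfl⟩)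

lemma exists_preimage (L : Submodule ℂ H) (X₀ : Set X) (hfin₀ : X₀.Finite)
    (hreg₂ : Lᗮ ⊓ spanE X₀ = ⊥) {x : X} (hx : x ∈ X₀) :
    ∃ u ∈ L, ∀ y ∈ X₀, u y = if y = x then 1 else 0 := by
  classical
  set t := hfin₀.toFinset with ht
  let R : H →ₗ[ℂ] EuclideanSpace ℂ ↥t :=
    { toFun := fun u => WithLp.toLp 2 (fun y => u (y : X))
      map_add' := fun f g => by ext y; simp [lp.coeFn_add]
      map_smul' := fun c f => by ext y; simp [lp.coeFn_smul] }
  set G : Submodule ℂ (EuclideanSpace ℂ ↥t) := Submodule.map R L with hG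
  haveI hfd : FiniteDimensional ℂ ↥G := FiniteDimensional.finiteDimensional_submodule G
  haveI : CompleteSpace ↥G := FiniteDimensional.complete ℂ ↥G
  have hGtop : G = ⊤ := by
    rw [← Submodule.orthogonal_eq_bot_iff, eq_bot_iff]
    intro c hc
    set chat : H := ∑ y : ↥t, c y • basisVec (y : X) with hchat
    have hchat_mem : chat ∈ spanE X₀ := by
      refine Submodule.sum_mem _ fun y _ => Submodule.smul_mem _ _ ?_
      exact basisVec_mem_spanE (hfin₀.mem_toFinset.1 y.2)
    have hchat_orth : chat ∈ Lᗮ := by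
      rw [Submodule.mem_orthogonal]
      intro u hu
      have h1 : (inner ℂ u chat : ℂ) = ∑ y : ↥t, conj (u (y:X)) * c y := by
        rw [hchat, inner_sum]
        refine Finset.sum_congr rfl fun y _ => ?_
        rw [inner_smul_right, basisVec, lp.inner_single_right]
        simp only [RCLike.inner_apply, map_one, mul_one]
        ring
      have h2 : (inner ℂ (R u) c : ℂ) = 0 :=
        (Submodule.mem_orthogonal G c).1 hc _ ⟨u, hu, rfl⟩
      rw [PiLp.inner_apply] at h2
      simp only [RCLike.inner_apply] at h2
      rw [h1]
      rw [← h2]; exact Finset.sum_congr rfl fun y _ => mul_comm _ _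
    have hchat0 : chat = 0 := by
      have hmem : chat ∈ Lᗮ ⊓ spanE X₀ := Submodule.mem_inf.2 ⟨hchat_orth, hchat_mem⟩
      rw [hreg₂] at hmem
      exact (Submodule.mem_bot ℂ).1 hmem
    have hcoord : ∀ y : ↥t, chat (y : X) = c y := by
      intro y
      have hterm : ∀ z : ↥t, (c z • basisVec (z:X) : H) (y:X) = if y = z then c y else 0 := by
        intro z
        rw [lp.coeFn_smul, Pi.smul_apply, basisVec_apply]
        by_cases h : y = z
        · subst h; simp
        · have hne : (y:X) ≠ (z:X) := fun hh => h (Subtype.ext hh)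
          simp [hne, h]
      have : chat (y:X) = ∑ z : ↥t, (c z • basisVec (z:X) : H) (y:X) := by
        rw [hchat, lp.coeFn_sum, Finset.sum_apply]
      rw [this, Finset.sum_congr rfl (fun z _ => hterm z), Finset.sum_ite_eq]
      simp
    have : ∀ y : ↥t, c y = 0 := by
      intro y
      rw [← hcoord y, hchat0]
      simp [lp.coeFn_zero]
    rw [Submodule.mem_bot]
    ext y; exact this y
  have hxt : x ∈ t := hfin₀.mem_toFinset.2 hx
  have : WithLp.toLp 2 (fun y : ↥t => if (y:X) = x then (1:ℂ) else 0) ∈ G := hGtop ▸ Submodule.mem_top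
  obtain ⟨u, hu, hue⟩ := this
  refine ⟨u, hu, fun y hy => ?_⟩
  have := congrFun (congrArg WithLp.ofLp hue) ⟨y, hfin₀.mem_toFinset.2 hy⟩
  exact this

/-- If `L ∩ E_{X₀'} = 0` and `L^⊥ ∩ E_{X₀} = 0` with `X₀ = X₁ ⊔ X₂`, then
`L ∩ E_{X∖X₁}` has trivial intersection with `E_{X₀'}` and its orthogonal complement
inside `E_{X∖X₁}` has trivial intersection with `E_{X₂}`. -/
theorem stmt10 (L : Submodule ℂ (lp (fun _ : X => ℂ) 2))
    (hL : IsClosed (L : Set (lp (fun _ : X => ℂ) 2)))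
    (X₀ X₀' X₁ X₂ : Set X) (hfin₀ : X₀.Finite) (hfin₀' : X₀'.Finite)
    (hdisj : Disjoint X₀ X₀') (hpart : X₀ = X₁ ∪ X₂) (hdisj' : Disjoint X₁ X₂)
    (hreg₁ : L ⊓ spanE X₀' = ⊥) (hreg₂ : Lᗮ ⊓ spanE X₀ = ⊥) :
    (L ⊓ spanE X₁ᶜ) ⊓ spanE X₀' = ⊥ ∧
    ((L ⊓ spanE X₁ᶜ)ᗮ ⊓ spanE X₁ᶜ) ⊓ spanE X₂ = ⊥ := by
  classical
  have hX₁ : X₁ ⊆ X₀ := hpart ▸ Set.subset_union_left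
  have hX₂ : X₂ ⊆ X₀ := hpart ▸ Set.subset_union_right
  constructor
  · rw [eq_bot_iff, ← hreg₁]
    exact le_inf (inf_le_left.trans inf_le_left) inf_le_right
  · rw [eq_bot_iff]
    intro v hv
    obtain ⟨⟨hvM, hv1⟩, hv2⟩ := hv
    rw [Submodule.mem_bot]
    have hfin₁ : X₁.Finite := hfin₀.subset hX₁
    set t₁ := hfin₁.toFinset with ht₁
    have hch : ∀ x : X, ∃ u : H, x ∈ X₁ → u ∈ L ∧ ∀ y ∈ X₀, u y = if y = x then 1 else 0 := by
      intro x
      by_cases hx : x ∈ X₁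
      · obtain ⟨u, hu, hu2⟩ := exists_preimage L X₀ hfin₀ hreg₂ (hX₁ hx)
        exact ⟨u, fun _ => ⟨hu, hu2⟩⟩
      · exact ⟨0, fun h => absurd h hx⟩
    choose u hu using hch
    set c : H := ∑ x ∈ t₁, conj (inner ℂ v (u x) : ℂ) • basisVec x with hc
    have hcmem : c ∈ spanE X₁ :=
      Submodule.sum_mem _ fun x hxm =>
        Submodule.smul_mem _ _ (basisVec_mem_spanE (hfin₁.mem_toFinset.1 hxm))
    have hkey : ∀ w ∈ L, (inner ℂ v w : ℂ) = inner ℂ c w := by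
      intro w hw
      set w' : H := w - ∑ x ∈ t₁, w x • u x with hw'def
      have hw'L : w' ∈ L :=
        Submodule.sub_mem _ hw (Submodule.sum_mem _ fun x hxm =>
          Submodule.smul_mem _ _ (hu x (hfin₁.mem_toFinset.1 hxm)).1)
      have hw'c : w' ∈ spanE X₁ᶜ := by
        rw [mem_spanE]
        intro y hy
        rw [Set.notMem_compl_iff] at hy
        have hy₀ : y ∈ X₀ := hX₁ hy
        have hval : (w' : ∀ _, ℂ) y = w y - ∑ x ∈ t₁, w x * (u x) y := by
          rw [hw'def, lp.coeFn_sub, Pi.sub_apply, lp.coeFn_sum, Finset.sum_apply]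
          simp [lp.coeFn_smul]
        rw [hval]
        have heach : ∀ x ∈ t₁, w x * (u x) y = if y = x then w y else 0 := by
          intro x hxm
          rw [(hu x (hfin₁.mem_toFinset.1 hxm)).2 y hy₀]
          by_cases h : y = x
          · subst h; simp
          · simp [h]
        rw [Finset.sum_congr rfl heach, Finset.sum_ite_eq]
        simp [ht₁, hfin₁.mem_toFinset.2 hy]
      have hw'M : w' ∈ L ⊓ spanE X₁ᶜ := ⟨hw'L, hw'c⟩
      have h0 : (inner ℂ w' v : ℂ) = 0 := (Submodule.mem_orthogonal _ v).1 hvM w' hw'M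
      have h0' : (inner ℂ v w' : ℂ) = 0 := by rw [← inner_conj_symm, h0, map_zero]
      have hsplit : (inner ℂ v w' : ℂ) = inner ℂ v w - ∑ x ∈ t₁, w x * (inner ℂ v (u x) : ℂ) := by
        rw [hw'def, inner_sub_right, inner_sum]
        congr 1
        exact Finset.sum_congr rfl fun x _ => by rw [inner_smul_right]
      rw [hsplit] at h0'
      have hvw : (inner ℂ v w : ℂ) = ∑ x ∈ t₁, w x * (inner ℂ v (u x) : ℂ) :=
        sub_eq_zero.mp h0'
      have hcw : (inner ℂ c w : ℂ) = ∑ x ∈ t₁, w x * (inner ℂ v (u x) : ℂ) := by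
        rw [hc, sum_inner]
        refine Finset.sum_congr rfl fun x _ => ?_
        rw [inner_smul_left, basisVec, lp.inner_single_left]
        simp only [RCLike.inner_apply, map_one, one_mul, RingHomCompTriple.comp_apply,
          RingHom.id_apply, starRingEnd_self_apply]
        ring
      rw [hvw, hcw]
    have hvc : v - c ∈ Lᗮ := by
      rw [Submodule.mem_orthogonal']
      intro w hw
      rw [inner_sub_left, hkey w hw, sub_self]
    have hvc0 : v - c = 0 := by
      have hmem : v - c ∈ Lᗮ ⊓ spanE X₀ :=
        ⟨hvc, Submodule.sub_mem _ (spanE_mono hX₂ hv2) (spanE_mono hX₁ hcmem)⟩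
      rw [hreg₂] at hmem
      exact (Submodule.mem_bot ℂ).1 hmem
    have hveqc : v = c := sub_eq_zero.mp hvc0
    apply lp.ext; funext y
    rw [lp.coeFn_zero, Pi.zero_apply]
    by_cases hy : y ∈ X₂
    · have hy1 : y ∉ X₁ := fun h => Set.disjoint_left.mp hdisj' h hy
      rw [hveqc]
      exact mem_spanE.1 hcmem y hy1
    · exact mem_spanE.1 hv2 y hy


end
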